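/- Let Γ be a finite lower Eulerian poset with rank function ρ_Γ and let q be a join-admissible element of Γ with q ≠ 0̂_Γ. Set X = Γ ∖ {z ∈ Γ : q ≤ z} and Y = {z ∈ Γ : q ≤ z}, equipped with the rank functions obtained by restricting ρ_Γ to X and restricting ρ_Γ − 1 to Y. Then X and Y are lower Eulerian posets, and the map σ̂ : X → Y defined by σ̂(x) = x ∨ q is a strong formal subdivision. -/

import Mathlib

namespace SFSPaper

variable {α β : Type*}

/-- `ρ` is a rank function: it increases by exactly one along covering relations. -/
def IsRankFunction [Preorder α] (ρ : α → ℤ) : Prop :=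
  ∀ ⦃z z' : α⦄, z ⋖ z' → ρ z' = ρ z + 1

/-- `σ` is rank-increasing with respect to the rank functions `ρX` and `ρY`. -/
def RankIncreasing [Preorder α] [Preorder β] (ρX : α → ℤ) (ρY : β → ℤ) (σ : α → β) : Prop :=
  ∀ x : α, ρX x ≤ ρY (σ x)

/-- `σ` is strongly surjective. -/
def StronglySurjective [Preorder α] [Preorder β] (ρX : α → ℤ) (ρY : β → ℤ) (σ : α → β) : Prop :=
  Function.Surjective σ ∧
    ∀ (x : α) (y : β), σ x ≤ y → ∃ x' : α, x ≤ x' ∧ ρX x' = ρY y ∧ σ x' = y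

/-- The alternating sum `∑_{z ≤ w ≤ z'} (-1)^(ρ w)`. -/
noncomputable def intervalEulerSum [Preorder α] (ρ : α → ℤ) (z z' : α) : ℚ :=
  ∑ᶠ (w : α) (_ : z ≤ w ∧ w ≤ z'), (-1 : ℚ) ^ ρ w

/-- A poset is lower Eulerian with respect to `ρ` if `ρ` is a rank function, there is a
unique minimal (i.e. least) element, and every nontrivial interval has as many elements of even
rank as of odd rank. -/
def LowerEulerian [PartialOrder α] (ρ : α → ℤ) : Prop :=
  IsRankFunction ρ ∧ (∃ b : α, ∀ z : α, b ≤ z) ∧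
    ∀ z z' : α, z < z' → intervalEulerSum ρ z z' = 0

/-- Eulerian: lower Eulerian with a unique maximal element. -/
def Eulerian [PartialOrder α] (ρ : α → ℤ) : Prop :=
  LowerEulerian ρ ∧ ∃ t : α, ∀ z : α, z ≤ t

/-- Strong formal subdivision. -/
def StrongFormalSubdivision [PartialOrder α] [PartialOrder β]
    (ρX : α → ℤ) (ρY : β → ℤ) (σ : α → β) : Prop :=
  Monotone σ ∧ RankIncreasing ρX ρY σ ∧ StronglySurjective ρX ρY σ ∧
    ∀ (x : α) (y : β), σ x ≤ y →
      (∑ᶠ (x' : α) (_ : x ≤ x' ∧ σ x' = y), (-1 : ℚ) ^ (ρY y - ρX x')) = 1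

/-- `q` is join-admissible: every `z` has a join with `q`. -/
def JoinAdmissible [Preorder α] (q : α) : Prop :=
  ∀ z : α, ∃ j : α, IsLeast {w : α | z ≤ w ∧ q ≤ w} j

/-- The rank of a poset: the maximal length of a chain `z_0 < z_1 < ⋯ < z_s`. -/
noncomputable def posetRank (α : Type*) [Preorder α] : ℕ :=
  sSup {n : ℕ | ∃ c : Fin (n + 1) → α, StrictMono c}

/-- A poset is graded if all of its maximal chains have the same length (cardinality). -/
def GradedPoset (α : Type*) [Preorder α] : Prop :=
  ∀ s t : Set α, IsMaxChain (· ≤ ·) s → IsMaxChain (· ≤ ·) t → s.ncard = t.ncard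



section Aux

open Finset

open scoped Classical in
private lemma finsum_cond_eq {Γ : Type*} [Fintype Γ] (f : Γ → ℚ) (p : Γ → Prop) :
    (∑ᶠ (w : Γ) (_ : p w), f w) = ∑ w ∈ Finset.univ.filter p, f w :=
  finsum_cond_eq_sum_of_cond_iff f (fun {x} _ => by simp)

private lemma neg_one_zpow_neg (m : ℤ) : ((-1 : ℚ)) ^ (-m) = (-1) ^ m := by
  rw [zpow_neg]
  refine inv_eq_of_mul_eq_one_left ?_
  rw [← mul_zpow]; norm_num

private lemma neg_one_zpow_sq (m : ℤ) : ((-1 : ℚ)) ^ m * (-1) ^ m = 1 := by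
  rw [← mul_zpow]; norm_num

private lemma rank_lt_of_lt {Γ : Type*} [PartialOrder Γ] [Finite Γ] {ρ : Γ → ℤ}
    (hρ : IsRankFunction ρ) {b : Γ} : ∀ a : Γ, a < b → ρ a < ρ b := by
  have : WellFoundedGT Γ := Finite.to_wellFoundedGT
  refine fun a => (wellFounded_gt (α := Γ)).induction
    (C := fun a => a < b → ρ a < ρ b) a ?_
  intro a ih hab
  obtain ⟨c, hac, hcb⟩ := exists_covBy_le_of_lt hab
  rcases hcb.lt_or_eq with h | rfl
  · have h1 := ih c hac.lt h
    have := hρ hac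
    omega
  · have := hρ hac
    omega

open scoped Classical in
private lemma finsum_subtype_eq_sum {Γ : Type*} [Fintype Γ] {p : Γ → Prop}
    (P : {z : Γ // p z} → Prop) (Q : Γ → Prop)
    (hPQ : ∀ w : {z : Γ // p z}, P w ↔ Q w.1) (f : Γ → ℚ) :
    (∑ᶠ (w : {z : Γ // p z}) (_ : P w), f w.1)
      = ∑ w ∈ univ.filter (fun w => p w ∧ Q w), f w := by
  have h1 : (univ.filter (fun w => p w ∧ Q w)) = (univ.filter p).filter Q :=
    (Finset.filter_filter _ _ _).symm
  have h2 : ∑ w ∈ univ.filter (fun w => p w ∧ Q w), f w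
      = ∑ w : {z : Γ // p z}, if P w then f w.1 else 0 := by
    rw [h1, Finset.sum_filter, Finset.sum_subtype (p := p) (univ.filter p) (fun x => by simp)
        (fun w => if Q w then f w else 0)]
    exact Finset.sum_congr rfl fun w _ => by simp only [hPQ w]
  rw [finsum_cond_eq (fun w => f w.1) P, Finset.sum_filter, h2]

open scoped Classical

variable {Γ : Type*} [PartialOrder Γ] [Finite Γ] [Fintype Γ]

private lemma euler_finset {ρ : Γ → ℤ} (hΓ : LowerEulerian ρ) {z z' : Γ} (h : z < z') :
    ∑ w ∈ univ.filter (fun w => z ≤ w ∧ w ≤ z'), ((-1:ℚ)) ^ ρ w = 0 := by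
  have h2 := hΓ.2.2 z z' h
  rw [intervalEulerSum, finsum_cond_eq] at h2
  convert h2 using 2
  congr!

private lemma interval_self (z : Γ) :
    univ.filter (fun w => z ≤ w ∧ w ≤ z) = {z} := by
  ext w; simp only [mem_filter, mem_univ, true_and, mem_singleton]
  exact ⟨fun h => le_antisymm h.2 h.1, fun h => by simp [h]⟩

private lemma interval_sum {ρ : Γ → ℤ} (hΓ : LowerEulerian ρ) {z z' : Γ} (h : z ≤ z') :
    ∑ w ∈ univ.filter (fun w => z ≤ w ∧ w ≤ z'), ((-1:ℚ)) ^ ρ w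
      = if z = z' then (-1) ^ ρ z' else 0 := by
  rcases eq_or_lt_of_le h with rfl | h'
  · rw [if_pos rfl, interval_self, Finset.sum_singleton]
  · rw [if_neg h'.ne, euler_finset hΓ h']

private lemma key {ρ : Γ → ℤ} (hΓ : LowerEulerian ρ) (q : Γ)
    (jn : Γ → Γ) (hjn : ∀ z : Γ, IsLeast {w : Γ | z ≤ w ∧ q ≤ w} (jn z))
    {x : Γ} (hx : ¬ q ≤ x) :
    ∀ y : Γ, jn x ≤ y →
      ∑ w ∈ univ.filter (fun w => x ≤ w ∧ ¬ q ≤ w ∧ jn w = y), ((-1:ℚ)) ^ ρ w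
        = -(-1) ^ ρ y := by
  have : WellFoundedLT Γ := Finite.to_wellFoundedLT
  intro y
  refine WellFoundedLT.induction
    (motive := fun y => jn x ≤ y →
      ∑ w ∈ univ.filter (fun w => x ≤ w ∧ ¬ q ≤ w ∧ jn w = y), ((-1:ℚ)) ^ ρ w
        = -(-1) ^ ρ y) y ?_
  clear y; intro y ih hy
  have hxjx : x ≤ jn x := (hjn x).1.1
  have hqjx : q ≤ jn x := (hjn x).1.2
  have hqy : q ≤ y := hqjx.trans hy
  have hxy : x < y := lt_of_le_of_ne (hxjx.trans hy) (by rintro rfl; exact hx hqy)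
  have h0 : ∑ w ∈ univ.filter (fun w => x ≤ w ∧ w ≤ y), ((-1:ℚ)) ^ ρ w = 0 :=
    euler_finset hΓ hxy
  have hsplit := Finset.sum_filter_add_sum_filter_not
    (univ.filter fun w => x ≤ w ∧ w ≤ y) (fun w => q ≤ w) (fun w => ((-1:ℚ)) ^ ρ w)
  set t : Finset Γ := univ.filter (fun u => jn x ≤ u ∧ u ≤ y) with ht_def
  have hA : (univ.filter fun w => x ≤ w ∧ w ≤ y).filter (fun w => q ≤ w) = t := by
    ext w
    simp only [ht_def, mem_filter, mem_univ, true_and]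
    constructor
    · rintro ⟨⟨hxw, hwy⟩, hqw⟩; exact ⟨(hjn x).2 ⟨hxw, hqw⟩, hwy⟩
    · rintro ⟨hjw, hwy⟩; exact ⟨⟨hxjx.trans hjw, hwy⟩, hqjx.trans hjw⟩
  have ht_sum : ∑ u ∈ t, ((-1:ℚ)) ^ ρ u = if jn x = y then (-1) ^ ρ y else 0 :=
    interval_sum hΓ hy
  set B : Finset Γ :=
    (univ.filter fun w => x ≤ w ∧ w ≤ y).filter (fun w => ¬ q ≤ w) with hB_def
  have hmaps : ∀ w ∈ B, jn w ∈ t := by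
    intro w hw
    simp only [hB_def, mem_filter, mem_univ, true_and] at hw
    obtain ⟨⟨hxw, hwy⟩, hqw⟩ := hw
    simp only [ht_def, mem_filter, mem_univ, true_and]
    exact ⟨(hjn x).2 ⟨hxw.trans (hjn w).1.1, (hjn w).1.2⟩, (hjn w).2 ⟨hwy, hqy⟩⟩
  have hfib := Finset.sum_fiberwise_of_maps_to hmaps (fun w => ((-1:ℚ)) ^ ρ w)
  have hfib_eq : ∀ u ∈ t, B.filter (fun w => jn w = u)
      = univ.filter (fun w => x ≤ w ∧ ¬ q ≤ w ∧ jn w = u) := by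
    intro u hu
    simp only [ht_def, mem_filter, mem_univ, true_and] at hu
    ext w
    simp only [hB_def, mem_filter, mem_univ, true_and]
    constructor
    · rintro ⟨⟨⟨hxw, hwy⟩, hqw⟩, hjw⟩; exact ⟨hxw, hqw, hjw⟩
    · rintro ⟨hxw, hqw, hjw⟩
      exact ⟨⟨⟨hxw, ((hjn w).1.1.trans (hjw ▸ hu.2))⟩, hqw⟩, hjw⟩
  have hyt : y ∈ t := by simp [ht_def, hy]
  have herase : ∀ u ∈ t.erase y,
      ∑ w ∈ univ.filter (fun w => x ≤ w ∧ ¬ q ≤ w ∧ jn w = u), ((-1:ℚ)) ^ ρ w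
        = -(-1) ^ ρ u := by
    intro u hu
    obtain ⟨hne, hut⟩ := Finset.mem_erase.1 hu
    simp only [ht_def, mem_filter, mem_univ, true_and] at hut
    exact ih u (lt_of_le_of_ne hut.2 hne) hut.1
  have hBsum : ∑ w ∈ B, ((-1:ℚ)) ^ ρ w
      = (∑ w ∈ univ.filter (fun w => x ≤ w ∧ ¬ q ≤ w ∧ jn w = y), ((-1:ℚ)) ^ ρ w)
        + ∑ u ∈ t.erase y, (-(-1:ℚ) ^ ρ u) := by
    rw [← hfib, ← Finset.add_sum_erase t _ hyt]
    rw [hfib_eq y hyt]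
    congr 1
    refine Finset.sum_congr rfl fun u hu => ?_
    rw [hfib_eq u (Finset.mem_of_mem_erase hu), herase u hu]
  have herase_sum : ∑ u ∈ t.erase y, ((-1:ℚ)) ^ ρ u
      = (if jn x = y then ((-1:ℚ)) ^ ρ y else 0) - (-1) ^ ρ y := by
    have := Finset.add_sum_erase t (fun u => ((-1:ℚ)) ^ ρ u) hyt
    rw [ht_sum] at this
    linarith only [this]
  rw [hA, ht_sum, hBsum] at hsplit
  rw [Finset.sum_neg_distrib, herase_sum] at hsplit
  rw [h0] at hsplit
  linarith only [hsplit]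

end Aux

/-- Let `Γ` be a finite lower Eulerian poset, `q ≠ 0̂_Γ` join-admissible
(with join function `jn`). Then `X = Γ ∖ Γ_{≥q}` and `Y = Γ_{≥q}` are lower Eulerian for
the restricted rank functions `ρ_Γ` and `ρ_Γ - 1` respectively, and `σ̂ : X → Y`,
`σ̂(x) = x ∨ q`, is a strong formal subdivision. -/

theorem joinMap_strongFormalSubdivision {Γ : Type*} [PartialOrder Γ] [Finite Γ]
    (ρ : Γ → ℤ) (hΓ : LowerEulerian ρ)
    (b : Γ) (hb : ∀ z : Γ, b ≤ z) (q : Γ) (hq : q ≠ b)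
    (jn : Γ → Γ) (hjn : ∀ z : Γ, IsLeast {w : Γ | z ≤ w ∧ q ≤ w} (jn z)) :
    LowerEulerian (fun x : {z : Γ // ¬ q ≤ z} => ρ x.1) ∧
    LowerEulerian (fun y : {z : Γ // q ≤ z} => ρ y.1 - 1) ∧
    StrongFormalSubdivision (fun x : {z : Γ // ¬ q ≤ z} => ρ x.1)
      (fun y : {z : Γ // q ≤ z} => ρ y.1 - 1)
      (fun x : {z : Γ // ¬ q ≤ z} => (⟨jn x.1, (hjn x.1).1.2⟩ : {z : Γ // q ≤ z})) := by
  classical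
  letI : Fintype Γ := Fintype.ofFinite Γ
  have hρ := hΓ.1
  have hbX : ¬ q ≤ b := fun h => hq (le_antisymm h (hb q))
  -- X is lower Eulerian
  have hXrank : IsRankFunction (fun x : {z : Γ // ¬ q ≤ z} => ρ x.1) := by
    intro z z' hcov
    have hcov' : z.1 ⋖ z'.1 := by
      refine ⟨Subtype.coe_lt_coe.2 hcov.lt, ?_⟩
      intro w hzw hwz'
      have hw : ¬ q ≤ w := fun hqw => z'.2 (hqw.trans hwz'.le)
      exact hcov.2 (show z < ⟨w, hw⟩ from Subtype.coe_lt_coe.1 hzw)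
        (show (⟨w, hw⟩ : {z : Γ // ¬ q ≤ z}) < z' from Subtype.coe_lt_coe.1 hwz')
    exact hρ hcov'
  have hXeuler : ∀ z z' : {z : Γ // ¬ q ≤ z}, z < z' →
      intervalEulerSum (fun x : {z : Γ // ¬ q ≤ z} => ρ x.1) z z' = 0 := by
    intro z z' hlt
    show (∑ᶠ (w : {z : Γ // ¬ q ≤ z}) (_ : z ≤ w ∧ w ≤ z'), (-1 : ℚ) ^ ρ w.1) = 0
    have hconv := finsum_subtype_eq_sum (p := fun z : Γ => ¬ q ≤ z)
      (fun w => z ≤ w ∧ w ≤ z') (fun w => z.1 ≤ w ∧ w ≤ z'.1)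
      (fun w => Iff.rfl) (fun w => (-1 : ℚ) ^ ρ w)
    rw [hconv]
    refine Eq.trans (Finset.sum_congr ?_ (fun _ _ => rfl))
      (euler_finset hΓ (Subtype.coe_lt_coe.2 hlt))
    ext w
    simp only [Finset.mem_filter, Finset.mem_univ, true_and, and_iff_right_iff_imp]
    exact fun h hqw => z'.2 (hqw.trans h.2)
  -- Y is lower Eulerian
  have hYrank : IsRankFunction (fun y : {z : Γ // q ≤ z} => ρ y.1 - 1) := by
    intro z z' hcov
    have hcov' : z.1 ⋖ z'.1 := by
      refine ⟨Subtype.coe_lt_coe.2 hcov.lt, ?_⟩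
      intro w hzw hwz'
      exact hcov.2 (show z < ⟨w, z.2.trans hzw.le⟩ from Subtype.coe_lt_coe.1 hzw)
        (show (⟨w, z.2.trans hzw.le⟩ : {z : Γ // q ≤ z}) < z' from Subtype.coe_lt_coe.1 hwz')
    have := hρ hcov'
    show ρ z'.1 - 1 = (ρ z.1 - 1) + 1
    omega
  have hYeuler : ∀ z z' : {z : Γ // q ≤ z}, z < z' →
      intervalEulerSum (fun y : {z : Γ // q ≤ z} => ρ y.1 - 1) z z' = 0 := by
    intro z z' hlt
    show (∑ᶠ (w : {z : Γ // q ≤ z}) (_ : z ≤ w ∧ w ≤ z'), (-1 : ℚ) ^ (ρ w.1 - 1)) = 0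
    have hconv := finsum_subtype_eq_sum (p := fun z : Γ => q ≤ z)
      (fun w => z ≤ w ∧ w ≤ z') (fun w => z.1 ≤ w ∧ w ≤ z'.1)
      (fun w => Iff.rfl) (fun w => (-1 : ℚ) ^ (ρ w - 1))
    rw [hconv]
    have hterm : ∀ w : Γ, ((-1:ℚ)) ^ (ρ w - 1) = -((-1:ℚ)) ^ ρ w := by
      intro w
      rw [zpow_sub₀ (by norm_num : (-1:ℚ) ≠ 0), zpow_one, div_neg, div_one]
    have h0 : ∑ w ∈ Finset.univ.filter (fun w => z.1 ≤ w ∧ w ≤ z'.1),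
        (-((-1:ℚ)) ^ ρ w) = 0 := by
      rw [Finset.sum_neg_distrib, euler_finset hΓ (Subtype.coe_lt_coe.2 hlt), neg_zero]
    refine Eq.trans (Finset.sum_congr ?_ (fun w _ => hterm w)) h0
    ext w
    simp only [Finset.mem_filter, Finset.mem_univ, true_and, and_iff_right_iff_imp]
    exact fun h => z.2.trans h.1
  -- the map and its properties
  set σ : {z : Γ // ¬ q ≤ z} → {z : Γ // q ≤ z} :=
    fun x => (⟨jn x.1, (hjn x.1).1.2⟩ : {z : Γ // q ≤ z}) with hσ
  have hmono : Monotone σ := by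
    intro x x' h
    show jn x.1 ≤ jn x'.1
    exact (hjn x.1).2 ⟨(show x.1 ≤ x'.1 from h).trans (hjn x'.1).1.1, (hjn x'.1).1.2⟩
  have hlt_jn : ∀ x : {z : Γ // ¬ q ≤ z}, x.1 < jn x.1 := fun x =>
    lt_of_le_of_ne (hjn x.1).1.1 (fun h => x.2 (h ▸ (hjn x.1).1.2))
  -- the key summation statement, part 2 of strong surjectivity
  have hss2 : ∀ (x : {z : Γ // ¬ q ≤ z}) (y : {z : Γ // q ≤ z}), σ x ≤ y →
      ∃ x' : {z : Γ // ¬ q ≤ z}, x ≤ x' ∧ ρ x'.1 = ρ y.1 - 1 ∧ σ x' = y := by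
    intro x y hle
    have hle' : jn x.1 ≤ y.1 := hle
    have hkey := key hΓ q jn hjn x.2 y.1 hle'
    have hne : (Finset.univ.filter
        (fun w => x.1 ≤ w ∧ ¬ q ≤ w ∧ jn w = y.1)).Nonempty := by
      apply Finset.nonempty_of_sum_ne_zero (f := fun w => ((-1:ℚ)) ^ ρ w)
      rw [hkey]
      simp only [ne_eq, neg_eq_zero]
      exact zpow_ne_zero _ (by norm_num)
    obtain ⟨x', hx'S, hmax⟩ : ∃ x' ∈ (Finset.univ.filter
        (fun w => x.1 ≤ w ∧ ¬ q ≤ w ∧ jn w = y.1)), ∀ w ∈ (Finset.univ.filter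
        (fun w => x.1 ≤ w ∧ ¬ q ≤ w ∧ jn w = y.1)), ¬ x' < w := by
      obtain ⟨i, hi⟩ := Finset.exists_maximal hne
      exact ⟨i, hi.1, fun w hw hlt => hlt.not_ge (hi.2 hw hlt.le)⟩
    simp only [Finset.mem_filter, Finset.mem_univ, true_and] at hx'S
    obtain ⟨hxx', hqx', hjx'⟩ := hx'S
    have hcov : x' ⋖ y.1 := by
      constructor
      · exact lt_of_le_of_ne ((hjn x').1.1.trans hjx'.le)
          (fun h => hqx' (h ▸ y.2))
      · intro w hw hwy
        by_cases hqw : q ≤ w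
        · have h5 : jn x' ≤ w := (hjn x').2 ⟨hw.le, hqw⟩
          rw [hjx'] at h5
          exact absurd h5 hwy.not_ge
        · have hjw : jn w = y.1 := by
            refine le_antisymm ((hjn w).2 ⟨hwy.le, y.2⟩) ?_
            have : jn x' ≤ jn w := (hjn x').2 ⟨hw.le.trans (hjn w).1.1, (hjn w).1.2⟩
            rwa [hjx'] at this
          refine hmax w ?_ hw
          simp only [Finset.mem_filter, Finset.mem_univ, true_and]
          exact ⟨hxx'.trans hw.le, hqw, hjw⟩
    have hrk := hρ hcov
    exact ⟨⟨x', hqx'⟩, hxx', by show ρ x' = ρ y.1 - 1; omega, Subtype.ext hjx'⟩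
  have hsurj : Function.Surjective σ := by
    intro y
    have hbley : σ ⟨b, hbX⟩ ≤ y := by
      show jn b ≤ y.1
      exact (hjn b).2 ⟨hb y.1, y.2⟩
    obtain ⟨x', -, -, hx'⟩ := hss2 ⟨b, hbX⟩ y hbley
    exact ⟨x', hx'⟩
  refine ⟨⟨hXrank, ⟨⟨b, hbX⟩, fun z => hb z.1⟩, hXeuler⟩,
    ⟨hYrank, ⟨⟨q, le_refl q⟩, fun z => z.2⟩, hYeuler⟩,
    hmono, ?_, ⟨hsurj, hss2⟩, ?_⟩
  · -- rank increasing
    intro x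
    have := rank_lt_of_lt hρ x.1 (hlt_jn x)
    show ρ x.1 ≤ ρ (jn x.1) - 1
    omega
  · -- the subdivision sum
    intro x y hle
    have hle' : jn x.1 ≤ y.1 := hle
    show (∑ᶠ (x' : {z : Γ // ¬ q ≤ z}) (_ : x ≤ x' ∧ σ x' = y),
      (-1 : ℚ) ^ (ρ y.1 - 1 - ρ x'.1)) = 1
    have hconv := finsum_subtype_eq_sum (p := fun z : Γ => ¬ q ≤ z)
      (fun x' => x ≤ x' ∧ σ x' = y) (fun w => x.1 ≤ w ∧ jn w = y.1)
      (fun w => and_congr Iff.rfl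
        ⟨fun h => congrArg Subtype.val h, fun h => Subtype.ext h⟩)
      (fun w => (-1 : ℚ) ^ (ρ y.1 - 1 - ρ w))
    rw [hconv]
    have hterm : ∀ w : Γ, ((-1:ℚ)) ^ (ρ y.1 - 1 - ρ w)
        = ((-1:ℚ)) ^ (ρ y.1 - 1) * ((-1:ℚ)) ^ ρ w := by
      intro w
      rw [sub_eq_add_neg (ρ y.1 - 1), zpow_add₀ (by norm_num : (-1:ℚ) ≠ 0),
        neg_one_zpow_neg]
    have hkey := key hΓ q jn hjn x.2 y.1 hle'
    have hsq := neg_one_zpow_sq (ρ y.1)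
    have h1 : ((-1:ℚ)) ^ (ρ y.1 - 1) = ((-1:ℚ)) ^ ρ y.1 * ((-1:ℚ)) ^ (-1:ℤ) := by
      rw [← zpow_add₀ (by norm_num : (-1:ℚ) ≠ 0), sub_eq_add_neg]
    have h2 : ((-1:ℚ)) ^ (-1:ℤ) = -1 := by norm_num
    have h3 : ∑ w ∈ Finset.univ.filter (fun w => x.1 ≤ w ∧ ¬ q ≤ w ∧ jn w = y.1),
        ((-1:ℚ)) ^ (ρ y.1 - 1) * ((-1:ℚ)) ^ ρ w = 1 := by
      rw [← Finset.mul_sum, hkey, h1, h2]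
      linear_combination hsq
    refine Eq.trans (Finset.sum_congr ?_ (fun w _ => hterm w)) h3
    ext w
    simp only [Finset.mem_filter, Finset.mem_univ, true_and]
    tauto

end SFSPaper
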